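/- Let 𝒬 be an intersection compatible pseudo-prime system in an excellent local ring (R, m, k), and let R̂ denote the m-adic completion of R. Then the pseudo-prime system 𝒬R̂ := { QR̂ : Q ∈ 𝒬 } in R̂ is again intersection compatible. -/

import Mathlib

open IsLocalRing TensorProduct

universe u

section Defs

variable (R : Type u) [CommRing R]

/-- The embedding dimension of a Noetherian local ring: `dim_k (m/m²)`. -/
noncomputable def embDim [IsLocalRing R] : ℕ :=
  Module.finrank (ResidueField R) (CotangentSpace R)

/-- A Noetherian local ring is regular if its embedding dimension equals its Krull dimension. -/
def IsRegularLocal [IsLocalRing R] : Prop :=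
  IsNoetherianRing R ∧ (embDim R : WithBot ℕ∞) = ringKrullDim R

/-- A (not necessarily local) commutative ring is regular if it is Noetherian and all of its
localizations at primes are regular local rings. -/
def IsRegularRing' : Prop :=
  IsNoetherianRing R ∧ ∀ (p : Ideal R) (_ : p.IsPrime), IsRegularLocal (Localization.AtPrime p)

/-- An algebra `A` over a field `k` is geometrically regular if `L ⊗ₖ A` is a regular ring for
every finite field extension `L` of `k`. -/
def IsGeomRegularAlgebra (k : Type u) (A : Type u) [Field k] [CommRing A] [Algebra k A] : Prop :=
  ∀ (L : Type u) [Field L] [Algebra k L], Module.Finite k L → IsRegularRing' (L ⊗[k] A)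

/-- A chain of primes is saturated if each step is a covering relation. -/
def IsSaturatedChain {α : Type u} [Preorder α] (c : LTSeries α) : Prop :=
  ∀ i : Fin c.length, c.toFun i.castSucc ⋖ c.toFun i.succ

/-- A ring is catenary if any two saturated chains of primes with the same endpoints have the
same length. -/
def IsCatenary : Prop :=
  ∀ c₁ c₂ : LTSeries (PrimeSpectrum R), c₁.head = c₂.head → c₁.last = c₂.last →
    IsSaturatedChain c₁ → IsSaturatedChain c₂ → c₁.length = c₂.length

/-- A ring is universally catenary if every finite type algebra over it is catenary. -/
def IsUniversallyCatenary : Prop :=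
  ∀ (S : Type u) [CommRing S] [Algebra R S], Algebra.FiniteType R S → IsCatenary S

/-- The residue field of a ring at a prime ideal. -/
abbrev residueFieldAt (q : Ideal R) [q.IsPrime] : Type u :=
  ResidueField (Localization.AtPrime q)

/-- A ring is a G-ring if, for every prime `p`, the formal fibers of `R_p` (the fibers of the
map from `R_p` to its `maximal-adic` completion, over the primes `q ⊆ p` of `R`) are
geometrically regular over the residue fields `κ(q)`. -/
def IsGRing : Prop :=
  ∀ (p : Ideal R) (_ : p.IsPrime) (q : Ideal R) (_ : q.IsPrime), q ≤ p →
    letI Rp := Localization.AtPrime p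
    letI Rphat := AdicCompletion (maximalIdeal Rp) Rp
    letI : Algebra R Rphat :=
      ((algebraMap Rp Rphat).comp (algebraMap R Rp)).toAlgebra
    letI : Algebra R (residueFieldAt R q) :=
      ((algebraMap (Localization.AtPrime q) (residueFieldAt R q)).comp
        (algebraMap R (Localization.AtPrime q))).toAlgebra
    letI : Module R Rphat := Algebra.toModule
    letI : Module R (residueFieldAt R q) := Algebra.toModule
    IsGeomRegularAlgebra (residueFieldAt R q) ((residueFieldAt R q) ⊗[R] Rphat)

/-- A ring is J-2 if the regular locus of every finite type algebra over it is open. -/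
def IsJ2 : Prop :=
  ∀ (S : Type u) [CommRing S] [Algebra R S], Algebra.FiniteType R S →
    IsOpen {p : PrimeSpectrum S | IsRegularLocal (Localization.AtPrime p.asIdeal)}

/-- A ring is excellent if it is Noetherian, universally catenary, a G-ring, and J-2. -/
def IsExcellentRing : Prop :=
  IsNoetherianRing R ∧ IsUniversallyCatenary R ∧ IsGRing R ∧ IsJ2 R

/-- A proper ideal of a local ring is equidimensional if all of its minimal primes have the same
coheight. -/
def IsEquidimensionalIdeal (Q : Ideal R) : Prop :=
  ∀ P ∈ Q.minimalPrimes, ringKrullDim (R ⧸ P) = ringKrullDim (R ⧸ Q)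

/-- A set of ideals of a local ring is a pseudo-prime system if each of its members is a proper
radical equidimensional ideal, and whenever some minimal prime of one member is contained in a
minimal prime of another, the first member is contained in the second. -/
def IsPseudoPrimeSystem (𝒬 : Set (Ideal R)) : Prop :=
  (∀ Q ∈ 𝒬, Q ≠ ⊤ ∧ Q.IsRadical ∧ IsEquidimensionalIdeal R Q) ∧
    ∀ Q₁ ∈ 𝒬, ∀ Q₂ ∈ 𝒬,
      (∃ P₁ ∈ Q₁.minimalPrimes, ∃ P₂ ∈ Q₂.minimalPrimes, P₁ ≤ P₂) → Q₁ ≤ Q₂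

/-- `e(R, 𝒬, d)`: the number of ideals in `𝒬` of coheight `d`. -/
noncomputable def sysCount (𝒬 : Set (Ideal R)) (d : ℕ) : ℕ :=
  {Q ∈ 𝒬 | ringKrullDim (R ⧸ Q) = (d : WithBot ℕ∞)}.ncard

/-- The set of all intersections of finite nonempty subcollections of `𝒬`. -/
def finiteIntersections (𝒬 : Set (Ideal R)) : Set (Ideal R) :=
  {I | ∃ α : Finset (Ideal R), α.Nonempty ∧ ↑α ⊆ 𝒬 ∧ I = α.inf id}

/-- A pseudo-prime system `𝒬` is intersection compatible if the set of intersections of finite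
nonempty subcollections of `𝒬` is closed under (finite) sums. -/
def IsIntersectionCompatible (𝒬 : Set (Ideal R)) : Prop :=
  ∀ I ∈ finiteIntersections R 𝒬, ∀ J ∈ finiteIntersections R 𝒬,
    I + J ∈ finiteIntersections R 𝒬

end Defs

section FlatAux

variable {R : Type*} [CommRing R] {M : Type*} [AddCommGroup M] [Module R M]

lemma flat_inf_smul_top [Module.Flat R M] (I J : Ideal R) :
    (I ⊓ J) • (⊤ : Submodule R M) = (I • ⊤) ⊓ (J • ⊤) := by
  refine le_antisymm (le_inf (Submodule.smul_mono_left inf_le_left)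
    (Submodule.smul_mono_left inf_le_right)) ?_
  intro x hx
  obtain ⟨hxI, hxJ⟩ := hx
  -- the natural injective map R⧸(I⊓J) → (R⧸I) × (R⧸J)
  let g₁ : (R ⧸ (I ⊓ J : Ideal R)) →ₗ[R] R ⧸ I :=
    Submodule.mapQ _ _ LinearMap.id (fun r hr => hr.1)
  let g₂ : (R ⧸ (I ⊓ J : Ideal R)) →ₗ[R] R ⧸ J :=
    Submodule.mapQ _ _ LinearMap.id (fun r hr => hr.2)
  let g := g₁.prod g₂
  have hg : Function.Injective g := by
    intro a b hab
    obtain ⟨ra, rfl⟩ := Submodule.Quotient.mk_surjective _ a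
    obtain ⟨rb, rfl⟩ := Submodule.Quotient.mk_surjective _ b
    simp only [g, g₁, g₂, LinearMap.prod_apply, Function.prod, Submodule.mapQ_apply,
      LinearMap.id_coe, id_eq, Prod.mk.injEq] at hab
    obtain ⟨h1, h2⟩ := hab
    rw [Submodule.Quotient.eq] at h1 h2 ⊢
    exact ⟨h1, h2⟩
  have hgM : Function.Injective (LinearMap.lTensor M g) :=
    Module.Flat.lTensor_preserves_injective_linearMap g hg
  -- x ⊗ 1 vanishes in M ⊗ R⧸I and M ⊗ R⧸J
  have hI0 : (x ⊗ₜ[R] (1 : R ⧸ I) : M ⊗[R] (R ⧸ I)) = 0 := by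
    have := TensorProduct.tensorQuotEquivQuotSMul_symm_mk I x
    rw [(Submodule.Quotient.mk_eq_zero _).mpr hxI, map_zero] at this
    exact this.symm
  have hJ0 : (x ⊗ₜ[R] (1 : R ⧸ J) : M ⊗[R] (R ⧸ J)) = 0 := by
    have := TensorProduct.tensorQuotEquivQuotSMul_symm_mk J x
    rw [(Submodule.Quotient.mk_eq_zero _).mpr hxJ, map_zero] at this
    exact this.symm
  have hpair : (x ⊗ₜ[R] ((1 : R ⧸ I), (1 : R ⧸ J)) : M ⊗[R] ((R ⧸ I) × (R ⧸ J))) = 0 := by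
    have h1 : ((1 : R ⧸ I), (1 : R ⧸ J)) = ((1 : R ⧸ I), (0 : R ⧸ J)) + ((0 : R ⧸ I), (1 : R ⧸ J)) := by
      simp
    rw [h1, TensorProduct.tmul_add]
    have e1 : (x ⊗ₜ[R] ((1 : R ⧸ I), (0 : R ⧸ J)) : M ⊗[R] ((R ⧸ I) × (R ⧸ J)))
        = LinearMap.lTensor M (LinearMap.inl R (R ⧸ I) (R ⧸ J)) (x ⊗ₜ[R] (1 : R ⧸ I)) := by
      simp [LinearMap.lTensor_tmul]
    have e2 : (x ⊗ₜ[R] ((0 : R ⧸ I), (1 : R ⧸ J)) : M ⊗[R] ((R ⧸ I) × (R ⧸ J)))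
        = LinearMap.lTensor M (LinearMap.inr R (R ⧸ I) (R ⧸ J)) (x ⊗ₜ[R] (1 : R ⧸ J)) := by
      simp [LinearMap.lTensor_tmul]
    rw [e1, e2, hI0, hJ0, map_zero, map_zero, add_zero]
  have hkey : (x ⊗ₜ[R] (1 : R ⧸ (I ⊓ J : Ideal R)) : M ⊗[R] (R ⧸ (I ⊓ J : Ideal R))) = 0 := by
    apply hgM
    rw [map_zero, LinearMap.lTensor_tmul]
    have : g (1 : R ⧸ (I ⊓ J : Ideal R)) = ((1 : R ⧸ I), (1 : R ⧸ J)) := by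
      show (g₁ (Submodule.Quotient.mk (1 : R)), g₂ (Submodule.Quotient.mk (1 : R))) = _
      rw [show g₁ (Submodule.Quotient.mk (1 : R)) = Submodule.Quotient.mk (1 : R) from
          Submodule.mapQ_apply _ _ _ _,
        show g₂ (Submodule.Quotient.mk (1 : R)) = Submodule.Quotient.mk (1 : R) from
          Submodule.mapQ_apply _ _ _ _]
      rfl
    rw [this, hpair]
  have := congrArg (TensorProduct.tensorQuotEquivQuotSMul M (I ⊓ J)) hkey
  rw [map_zero] at this
  have h1 : (1 : R ⧸ (I ⊓ J : Ideal R)) = Ideal.Quotient.mk _ (1 : R) := rfl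
  rw [h1, TensorProduct.tensorQuotEquivQuotSMul_tmul_mk, one_smul] at this
  exact (Submodule.Quotient.mk_eq_zero _).mp this

variable {S : Type*} [CommRing S] [Algebra R S]

lemma flat_map_inf [Module.Flat R S] (I J : Ideal R) :
    (I ⊓ J).map (algebraMap R S) = I.map (algebraMap R S) ⊓ J.map (algebraMap R S) := by
  apply Submodule.restrictScalars_injective R
  have := flat_inf_smul_top (M := S) I J
  rw [Ideal.smul_top_eq_map, Ideal.smul_top_eq_map, Ideal.smul_top_eq_map] at this
  rw [this]
  ext x
  simp

lemma flat_map_finset_inf [Module.Flat R S] (α : Finset (Ideal R)) (hne : α.Nonempty) :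
    (α.inf id).map (algebraMap R S) = α.inf (fun Q => Q.map (algebraMap R S)) := by
  classical
  induction hne using Finset.Nonempty.cons_induction with
  | singleton a => simp
  | cons a s ha hs ih =>
    rw [Finset.inf_cons, Finset.inf_cons, id_eq, flat_map_inf, ih]

end FlatAux

section MainAux

variable {R : Type u} [CommRing R] {S : Type u} [CommRing S] [Algebra R S]

lemma mem_finiteIntersections_map_iff [Module.Flat R S] (𝒬 : Set (Ideal R)) (I' : Ideal S)
    (hI' : I' ∈ finiteIntersections S ((fun Q : Ideal R => Q.map (algebraMap R S)) '' 𝒬)) :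
    ∃ I ∈ finiteIntersections R 𝒬, I' = I.map (algebraMap R S) := by
  classical
  obtain ⟨α', hne, hsub, rfl⟩ := hI'
  have hex : ∀ Q' ∈ α', ∃ Q, Q ∈ 𝒬 ∧ Q.map (algebraMap R S) = Q' := by
    intro Q' hQ'
    obtain ⟨Q, hQ, hQ'eq⟩ := hsub hQ'
    exact ⟨Q, hQ, hQ'eq⟩
  choose g hg1 hg2 using hex
  set gg : Ideal S → Ideal R := fun Q' => if h : Q' ∈ α' then g Q' h else ⊥ with hgg
  refine ⟨(α'.image gg).inf id, ⟨α'.image gg, hne.image gg, ?_, rfl⟩, ?_⟩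
  · intro Q hQ
    simp only [Finset.coe_image, Set.mem_image, Finset.mem_coe] at hQ
    obtain ⟨Q', hQ', rfl⟩ := hQ
    simp only [hgg, dif_pos hQ']
    exact hg1 Q' hQ'
  · rw [flat_map_finset_inf _ (hne.image gg), Finset.inf_image]
    refine (Finset.inf_congr rfl ?_).symm
    intro Q' hQ'
    simp only [Function.comp_apply, hgg, dif_pos hQ', id_eq]
    exact hg2 Q' hQ'

lemma map_mem_finiteIntersections [Module.Flat R S] (𝒬 : Set (Ideal R)) (I : Ideal R)
    (hI : I ∈ finiteIntersections R 𝒬) :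
    I.map (algebraMap R S) ∈
      finiteIntersections S ((fun Q : Ideal R => Q.map (algebraMap R S)) '' 𝒬) := by
  classical
  obtain ⟨α, hne, hsub, rfl⟩ := hI
  refine ⟨α.image (fun Q => Q.map (algebraMap R S)), hne.image _, ?_, ?_⟩
  · intro Q' hQ'
    simp only [Finset.coe_image, Set.mem_image, Finset.mem_coe] at hQ'
    obtain ⟨Q, hQ, rfl⟩ := hQ'
    exact ⟨Q, hsub hQ, rfl⟩
  · rw [flat_map_finset_inf _ hne, Finset.inf_image]
    rfl

end MainAux

open IsLocalRing in
/-- Intersection compatibility is preserved by extension to the `m`-adic completion of an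
excellent local ring. -/
theorem isIntersectionCompatible_map_adicCompletion (R : Type u) [CommRing R] [IsLocalRing R]
    (hexc : IsExcellentRing R) (𝒬 : Set (Ideal R)) (h𝒬 : IsPseudoPrimeSystem R 𝒬)
    (hcompat : IsIntersectionCompatible R 𝒬) :
    IsIntersectionCompatible (AdicCompletion (maximalIdeal R) R)
      ((fun Q : Ideal R =>
        Q.map (algebraMap R (AdicCompletion (maximalIdeal R) R))) '' 𝒬) := by
  haveI : IsNoetherianRing R := hexc.1
  haveI : Module.Flat R (AdicCompletion (maximalIdeal R) R) :=
    (AdicCompletion.flat_of_isNoetherian (maximalIdeal R))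
  intro I' hI' J' hJ'
  obtain ⟨I, hI, rfl⟩ := mem_finiteIntersections_map_iff 𝒬 I' hI'
  obtain ⟨J, hJ, rfl⟩ := mem_finiteIntersections_map_iff 𝒬 J' hJ'
  have : I.map (algebraMap R (AdicCompletion (maximalIdeal R) R)) +
      J.map (algebraMap R (AdicCompletion (maximalIdeal R) R)) =
      (I + J).map (algebraMap R (AdicCompletion (maximalIdeal R) R)) := by
    rw [Ideal.add_eq_sup, Ideal.add_eq_sup, Ideal.map_sup]
  rw [this]
  exact map_mem_finiteIntersections 𝒬 (I + J) (hcompat I hI J hJ)
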